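/- For any real x and thresholds δ₁ ≥ δ₂ > 0, |x − K_{δ₁}(x)| ≤ |x − K_{δ₂}(x)|, where K_δ(x) = δ·tanh(x/δ). -/

import Mathlib

private lemma convexOn_sinh' : ConvexOn ℝ (Set.Ici 0) Real.sinh := by
  apply convexOn_of_deriv2_nonneg (convex_Ici 0)
  · exact Real.continuous_sinh.continuousOn
  · exact Real.differentiable_sinh.differentiableOn
  · rw [Real.deriv_sinh]
    exact Real.differentiable_cosh.differentiableOn
  · intro x hx
    rw [interior_Ici, Set.mem_Ioi] at hx
    simp only [Function.iterate_succ, Function.iterate_zero, Function.comp_apply, id_eq,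
      Real.deriv_sinh, Real.deriv_cosh]
    exact (Real.sinh_pos_iff.2 hx).le

/-- Star-shapedness of sinh: for `0 ≤ b ≤ a`, `a * sinh b ≤ b * sinh a`. -/
private lemma sinh_star (a b : ℝ) (hb : 0 ≤ b) (hba : b ≤ a) :
    a * Real.sinh b ≤ b * Real.sinh a := by
  rcases eq_or_lt_of_le (hb.trans hba) with ha | ha
  · have ha0 : a = 0 := ha.symm
    have hb0 : b = 0 := le_antisymm (ha0 ▸ hba) hb
    simp [ha0, hb0]
  · have key := convexOn_sinh'.2 (Set.mem_Ici.2 (le_refl (0:ℝ)))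
      (Set.mem_Ici.2 (hb.trans hba))
      (show (0:ℝ) ≤ 1 - b / a by have := div_le_one_of_le₀ hba ha.le; linarith)
      (show (0:ℝ) ≤ b / a by positivity) (by ring)
    simp only [smul_eq_mul, Real.sinh_zero, mul_zero, zero_add] at key
    rw [div_mul_cancel₀ b ha.ne'] at key
    calc a * Real.sinh b ≤ a * (b / a * Real.sinh a) :=
          mul_le_mul_of_nonneg_left key ha.le
      _ = b * Real.sinh a := by field_simp

private lemma sinh_le_mul_cosh (u : ℝ) (hu : 0 ≤ u) : Real.sinh u ≤ u * Real.cosh u := by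
  have hmono : MonotoneOn (fun t => t * Real.cosh t - Real.sinh t) (Set.Ici 0) := by
    apply monotoneOn_of_deriv_nonneg (convex_Ici 0)
    · fun_prop
    · apply Differentiable.differentiableOn
      fun_prop
    · intro x hx
      rw [interior_Ici, Set.mem_Ioi] at hx
      have h1 : HasDerivAt (fun t => t * Real.cosh t - Real.sinh t)
          (1 * Real.cosh x + x * Real.sinh x - Real.cosh x) x :=
        ((hasDerivAt_id x).mul (Real.hasDerivAt_cosh x)).sub (Real.hasDerivAt_sinh x)
      rw [h1.deriv]
      have := Real.sinh_pos_iff.2 hx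
      nlinarith
  have := hmono (Set.mem_Ici.2 (le_refl (0:ℝ))) (Set.mem_Ici.2 hu) hu
  simpa using this

/-- `tanh u ≤ u` for `u ≥ 0`. -/
private lemma tanh_le_self (u : ℝ) (hu : 0 ≤ u) : Real.tanh u ≤ u := by
  rw [Real.tanh_eq_sinh_div_cosh, div_le_iff₀ (Real.cosh_pos _)]
  exact sinh_le_mul_cosh u hu

/-- Star-shapedness of tanh: for `0 < v ≤ u`, `v * tanh u ≤ u * tanh v`. -/
private lemma tanh_star (u v : ℝ) (hv : 0 < v) (hvu : v ≤ u) :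
    v * Real.tanh u ≤ u * Real.tanh v := by
  rw [Real.tanh_eq_sinh_div_cosh, Real.tanh_eq_sinh_div_cosh,
    mul_div_assoc', mul_div_assoc', div_le_div_iff₀ (Real.cosh_pos _) (Real.cosh_pos _)]
  have hA := sinh_star (u + v) (u - v) (by linarith) (by linarith)
  rw [Real.sinh_add, Real.sinh_sub] at hA
  nlinarith

private lemma gap_nonneg (δ : ℝ) (hδ : 0 < δ) (x : ℝ) (hx : 0 ≤ x) :
    0 ≤ x - δ * Real.tanh (x / δ) := by
  have h := tanh_le_self (x / δ) (by positivity)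
  have := mul_le_mul_of_nonneg_left h hδ.le
  rw [mul_div_cancel₀ _ hδ.ne'] at this
  linarith

private lemma main_nonneg (δ₁ δ₂ : ℝ) (hδ₂ : 0 < δ₂) (h : δ₂ ≤ δ₁) (x : ℝ) (hx : 0 ≤ x) :
    |x - δ₁ * Real.tanh (x / δ₁)| ≤ |x - δ₂ * Real.tanh (x / δ₂)| := by
  have hδ₁ : 0 < δ₁ := lt_of_lt_of_le hδ₂ h
  rw [abs_of_nonneg (gap_nonneg δ₁ hδ₁ x hx), abs_of_nonneg (gap_nonneg δ₂ hδ₂ x hx)]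
  rcases eq_or_lt_of_le hx with hx0 | hx0
  · simp [← hx0]
  · have hv : 0 < x / δ₁ := by positivity
    have hvu : x / δ₁ ≤ x / δ₂ := by
      apply div_le_div_of_nonneg_left hx hδ₂ h
    have key := tanh_star (x / δ₂) (x / δ₁) hv hvu
    -- key : (x/δ₁) * tanh (x/δ₂) ≤ (x/δ₂) * tanh (x/δ₁)
    have h2 : δ₂ * Real.tanh (x / δ₂) ≤ δ₁ * Real.tanh (x / δ₁) := by
      have hmul := mul_le_mul_of_nonneg_left key (by positivity : (0:ℝ) ≤ δ₁ * δ₂ / x)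
      have e1 : δ₁ * δ₂ / x * (x / δ₁ * Real.tanh (x / δ₂)) = δ₂ * Real.tanh (x / δ₂) := by
        field_simp
      have e2 : δ₁ * δ₂ / x * (x / δ₂ * Real.tanh (x / δ₁)) = δ₁ * Real.tanh (x / δ₁) := by
        field_simp
      rw [e1, e2] at hmul
      exact hmul
    linarith

/-- For any real x and thresholds δ₁ ≥ δ₂ > 0,
`|x − K_{δ₁}(x)| ≤ |x − K_{δ₂}(x)|` where `K_δ(x) = δ·tanh(x/δ)`. -/
theorem smooth_truncation_gap_anti_in_threshold (δ₁ δ₂ : ℝ) (hδ₂ : 0 < δ₂) (h : δ₂ ≤ δ₁)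
    (x : ℝ) :
    |x - δ₁ * Real.tanh (x / δ₁)| ≤ |x - δ₂ * Real.tanh (x / δ₂)| := by
  rcases le_or_gt 0 x with hx | hx
  · exact main_nonneg δ₁ δ₂ hδ₂ h x hx
  · have key := main_nonneg δ₁ δ₂ hδ₂ h (-x) (by linarith)
    have e : ∀ δ : ℝ, |(-x) - δ * Real.tanh (-x / δ)| = |x - δ * Real.tanh (x / δ)| := by
      intro δ
      rw [neg_div, Real.tanh_neg]
      rw [show (-x) - δ * -Real.tanh (x / δ) = -(x - δ * Real.tanh (x / δ)) by ring, abs_neg]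
    rw [e δ₁, e δ₂] at key
    exact key
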